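/- Let G be a finite connected simple graph on vertex set V, let B ⊆ V be a nonempty set of boundary vertices, and let x : V → ℝ³ be a realization such that every interior vertex (vertex not in B) is a strict convex combination of its neighbors. Then every vertex is realized in the convex hull of the boundary positions: for every v ∈ V, x(v) ∈ convexHull(x(B)), where x(B) = { x(b) : b ∈ B }. -/

import Mathlib

/-- `v` is realized as a strict convex combination of its neighbors in `G`. -/
def StrictConvexCombOfNeighbors {V : Type*} [Fintype V] (G : SimpleGraph V)
    [DecidableRel G.Adj] (x : V → EuclideanSpace ℝ (Fin 3)) (v : V) : Prop :=
  ∃ b : V → ℝ,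
    (∀ w ∈ G.neighborFinset v, 0 < b w) ∧
    (∑ w ∈ G.neighborFinset v, b w = 1) ∧
    x v = ∑ w ∈ G.neighborFinset v, b w • x w

/-- Discrete maximum principle: in a finite connected graph realized in `ℝ³` with
every interior vertex a strict convex combination of its neighbors, every vertex is
realized in the convex hull of the boundary positions. -/
theorem vertex_mem_convexHull_boundary
    {V : Type*} [Fintype V] (G : SimpleGraph V) [DecidableRel G.Adj]
    (hconn : G.Connected) (B : Set V) (hB : B.Nonempty)
    (x : V → EuclideanSpace ℝ (Fin 3))
    (hint : ∀ v ∉ B, StrictConvexCombOfNeighbors G x v) :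
    ∀ v : V, x v ∈ convexHull ℝ (x '' B) := by
  intro v
  by_contra hv
  have hfin : (x '' B).Finite := Set.toFinite _
  have hcomp : IsCompact (convexHull ℝ (x '' B)) := hfin.isCompact_convexHull ℝ
  obtain ⟨φ, u, hu1, hu2⟩ := geometric_hahn_banach_closed_point
    (convex_convexHull ℝ _) hcomp.isClosed hv
  obtain ⟨m, -, hm⟩ := Finset.exists_max_image Finset.univ (fun w => φ (x w))
    ⟨v, Finset.mem_univ v⟩
  have hm' : ∀ w : V, φ (x w) ≤ φ (x m) := fun w => hm w (Finset.mem_univ w)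
  have hvm : u < φ (x m) := lt_of_lt_of_le hu2 (hm' v)
  have hnotB : ∀ w, φ (x w) = φ (x m) → w ∉ B := by
    intro w hw hwB
    have : φ (x w) < u := hu1 _ (subset_convexHull ℝ _ ⟨w, hwB, rfl⟩)
    linarith
  have hstep : ∀ w, φ (x w) = φ (x m) → ∀ z, G.Adj w z → φ (x z) = φ (x m) := by
    intro w hw z hz
    obtain ⟨b, hbpos, hbsum, hbeq⟩ := hint w (hnotB w hw)
    by_contra hne
    have hzmem : z ∈ G.neighborFinset w := (G.mem_neighborFinset w z).2 hz
    have hzlt : φ (x z) < φ (x m) := lt_of_le_of_ne (hm' z) hne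
    have hlt : φ (x w) < φ (x m) := by
      calc φ (x w) = ∑ i ∈ G.neighborFinset w, b i * φ (x i) := by
            rw [hbeq, map_sum]
            exact Finset.sum_congr rfl fun i _ => by rw [map_smul]; rfl
        _ < ∑ i ∈ G.neighborFinset w, b i * φ (x m) := by
            apply Finset.sum_lt_sum
            · intro i hi
              exact mul_le_mul_of_nonneg_left (hm' i) (le_of_lt (hbpos i hi))
            · exact ⟨z, hzmem, mul_lt_mul_of_pos_left hzlt (hbpos z hzmem)⟩
        _ = φ (x m) := by rw [← Finset.sum_mul, hbsum, one_mul]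
    exact absurd hw (ne_of_lt hlt)
  have hwalk : ∀ {a c : V} (p : G.Walk a c),
      φ (x a) = φ (x m) → φ (x c) = φ (x m) := by
    intro a c p
    induction p with
    | nil => exact id
    | cons h _ ih => exact fun ha => ih (hstep _ ha _ h)
  obtain ⟨b0, hb0⟩ := hB
  exact hnotB b0 (hwalk ((hconn m b0).some) rfl) hb0
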